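/- There is no L(1,2)-edge labeling of the infinite octagonal grid T8 with labels in {0,…,25}; that is, the span λ'_{1,2}(T8) of L(1,2)-edge labeling of T8 is at least 26. -/

import Mathlib

/-- The infinite octagonal grid (king graph on `ℤ × ℤ`): distinct vertices are
adjacent iff their Chebyshev distance is `1`. -/
def T8 : SimpleGraph (ℤ × ℤ) where
  Adj u v := u ≠ v ∧ max |u.1 - v.1| |u.2 - v.2| = 1
  symm := by
    constructor
    rintro u v ⟨h1, h2⟩
    refine ⟨h1.symm, ?_⟩
    rw [abs_sub_comm v.1 u.1, abs_sub_comm v.2 u.2]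
    exact h2
  loopless := by constructor; rintro u ⟨h, -⟩; exact h rfl

/-- Two (unordered pairs regarded as) edges share an endpoint. -/
def SharesEndpoint (e1 e2 : Sym2 (ℤ × ℤ)) : Prop := ∃ v, v ∈ e1 ∧ v ∈ e2

/-- Two edges of `T8` are at distance `1`: distinct and sharing an endpoint. -/
def EdgeDist1 (e1 e2 : Sym2 (ℤ × ℤ)) : Prop := e1 ≠ e2 ∧ SharesEndpoint e1 e2

/-- Two edges of `T8` are at distance `2`: distinct, sharing no endpoint, but some
edge of `T8` shares an endpoint with both. -/
def EdgeDist2 (e1 e2 : Sym2 (ℤ × ℤ)) : Prop :=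
  e1 ≠ e2 ∧ ¬ SharesEndpoint e1 e2 ∧
    ∃ e3 ∈ T8.edgeSet, SharesEndpoint e1 e3 ∧ SharesEndpoint e3 e2

/-- `f` is an `L(1,2)`-edge labeling of `T8`: edges at distance `1` get distinct
labels and edges at distance `2` get labels differing by at least `2`. -/
def IsL12 (f : Sym2 (ℤ × ℤ) → ℕ) : Prop :=
  (∀ e1 ∈ T8.edgeSet, ∀ e2 ∈ T8.edgeSet, EdgeDist1 e1 e2 → f e1 ≠ f e2) ∧
  (∀ e1 ∈ T8.edgeSet, ∀ e2 ∈ T8.edgeSet, EdgeDist2 e1 e2 → 2 ≤ |(f e1 : ℤ) - (f e2 : ℤ)|)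

/-- An `L(1,2)`-edge labeling of `T8` with labels in `{0, …, n}`. -/
def IsL12Bounded (n : ℕ) (f : Sym2 (ℤ × ℤ) → ℕ) : Prop :=
  IsL12 f ∧ ∀ e ∈ T8.edgeSet, f e ≤ n

/-- The unit square `S(a,b)`. -/
def unitSquare (a b : ℤ) : Set (ℤ × ℤ) :=
  {(a, b), (a + 1, b), (a, b + 1), (a + 1, b + 1)}

/-- `GS S`: the set of edges of `T8` incident to at least one vertex of `S`. -/
def GS (S : Set (ℤ × ℤ)) : Set (Sym2 (ℤ × ℤ)) :=
  {e | e ∈ T8.edgeSet ∧ ∃ v ∈ S, v ∈ e}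

/-- `Sprime a b`: vertices at Chebyshev distance at most `2` from some vertex of
`S(a,b)` (that is, `S ∪ N(S) ∪ N(N(S))`). -/
def Sprime (a b : ℤ) : Set (ℤ × ℤ) :=
  {u | ∃ v ∈ unitSquare a b, max |u.1 - v.1| |u.2 - v.2| ≤ 2}

/-- Two edges sharing an endpoint `v`, written `e1 = {v, v+d1}` and `e2 = {v, v+d2}`,
are at angle `45°` if exactly one of `d1, d2` has both coordinates nonzero and
`d1 · d2 = 1`. -/
def Angle45 (e1 e2 : Sym2 (ℤ × ℤ)) : Prop :=
  ∃ v d1 d2 : ℤ × ℤ, e1 = s(v, v + d1) ∧ e2 = s(v, v + d2) ∧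
    Xor' (d1.1 ≠ 0 ∧ d1.2 ≠ 0) (d2.1 ≠ 0 ∧ d2.2 ≠ 0) ∧
    d1.1 * d2.1 + d1.2 * d2.2 = 1

/-- An edge is slanting if its endpoints differ in both coordinates. -/
def Slanting (e : Sym2 (ℤ × ℤ)) : Prop :=
  ∃ u v : ℤ × ℤ, e = s(u, v) ∧ u.1 ≠ v.1 ∧ u.2 ≠ v.2

/-- `e, e', e''` form the edge set of a triangle of `T8`. -/
def TriangleEdgeSet (e e' e'' : Sym2 (ℤ × ℤ)) : Prop :=
  ∃ u v w : ℤ × ℤ, T8.Adj u v ∧ T8.Adj v w ∧ T8.Adj u w ∧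
    ({e, e', e''} : Set (Sym2 (ℤ × ℤ))) = {s(u, v), s(v, w), s(u, w)}

/-- A triangle of `T8`: three pairwise adjacent vertices. -/
def IsTriangle (t : Finset (ℤ × ℤ)) : Prop :=
  t.card = 3 ∧ ∀ u ∈ t, ∀ v ∈ t, u ≠ v → T8.Adj u v

/-- The edges of a triangle. -/
def triangleEdges (t : Finset (ℤ × ℤ)) : Set (Sym2 (ℤ × ℤ)) :=
  {e | ∃ u ∈ t, ∃ v ∈ t, u ≠ v ∧ e = s(u, v)}


section Aux

instance : DecidableRel T8.Adj := fun u v =>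
  decidable_of_iff (u ≠ v ∧ max |u.1 - v.1| |u.2 - v.2| = 1) Iff.rfl

/-- Translation by `c`. -/
def trm (c v : ℤ × ℤ) : ℤ × ℤ := (c.1 + v.1, c.2 + v.2)

lemma trm_inj (c : ℤ × ℤ) : Function.Injective (trm c) := by
  intro a b h
  simp only [trm, Prod.mk.injEq, Prod.ext_iff] at h ⊢
  omega

lemma adj_trm (c u v : ℤ × ℤ) : T8.Adj (trm c u) (trm c v) ↔ T8.Adj u v := by
  show ((trm c u ≠ trm c v) ∧ _) ↔ (u ≠ v ∧ _)
  have h1 : trm c u ≠ trm c v ↔ u ≠ v := (trm_inj c).ne_iff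
  have h2 : (trm c u).1 - (trm c v).1 = u.1 - v.1 := by simp only [trm]; ring
  have h3 : (trm c u).2 - (trm c v).2 = u.2 - v.2 := by simp only [trm]; ring
  rw [h1, h2, h3]

/-- The 26 edges incident to the unit square at the origin, as pairs
(square endpoint, other endpoint). -/
def basePairs : List ((ℤ × ℤ) × (ℤ × ℤ)) :=
  [((0,0),(1,0)), ((0,0),(0,1)), ((0,0),(1,1)), ((1,0),(0,1)), ((1,0),(1,1)), ((0,1),(1,1)),
   ((0,0),(-1,-1)), ((0,0),(-1,0)), ((0,0),(-1,1)), ((0,0),(0,-1)), ((0,0),(1,-1)),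
   ((1,0),(2,0)), ((1,0),(2,1)), ((1,0),(2,-1)), ((1,0),(1,-1)), ((1,0),(0,-1)),
   ((0,1),(-1,0)), ((0,1),(-1,1)), ((0,1),(-1,2)), ((0,1),(0,2)), ((0,1),(1,2)),
   ((1,1),(2,0)), ((1,1),(2,1)), ((1,1),(2,2)), ((1,1),(1,2)), ((1,1),(0,2))]

def corners : List (ℤ × ℤ) := [(0,0),(1,0),(0,1),(1,1)]

/-- The 26 edges incident to the unit square `S(c.1, c.2)`. -/
def ES (c : ℤ × ℤ) : List (Sym2 (ℤ × ℤ)) :=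
  basePairs.map (fun p => s(trm c p.1, trm c p.2))

lemma ES_eq_map (c : ℤ × ℤ) :
    ES c = (basePairs.map (fun p => s(p.1, p.2))).map (Sym2.map (trm c)) := by
  simp [ES, List.map_map, Function.comp, Sym2.map_pair_eq]

lemma ES_nodup (c : ℤ × ℤ) : (ES c).Nodup := by
  rw [ES_eq_map]
  refine List.Nodup.map (Sym2.map.injective (trm_inj c)) ?_
  decide

lemma ES_length (c : ℤ × ℤ) : (ES c).length = 26 := by simp [ES]; rfl

lemma ES_edge {c : ℤ × ℤ} {e : Sym2 (ℤ × ℤ)} (he : e ∈ ES c) : e ∈ T8.edgeSet := by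
  simp only [ES, List.mem_map] at he
  obtain ⟨p, hp, rfl⟩ := he
  have hadj : T8.Adj p.1 p.2 := by
    revert hp; revert p; decide
  exact T8.mem_edgeSet.mpr ((adj_trm c p.1 p.2).mpr hadj)

lemma ES_endpoint {c : ℤ × ℤ} {e : Sym2 (ℤ × ℤ)} (he : e ∈ ES c) :
    ∃ v0 ∈ corners, trm c v0 ∈ e := by
  simp only [ES, List.mem_map] at he
  obtain ⟨p, hp, rfl⟩ := he
  have h1 : p.1 ∈ corners := by revert hp; revert p; decide
  exact ⟨p.1, h1, by simp⟩

lemma corners_adj : ∀ u ∈ corners, ∀ v ∈ corners, u ≠ v → T8.Adj u v := by decide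

lemma shares_symm {e1 e2 : Sym2 (ℤ × ℤ)} (h : SharesEndpoint e1 e2) :
    SharesEndpoint e2 e1 := by obtain ⟨v, h1, h2⟩ := h; exact ⟨v, h2, h1⟩

lemma ES_dist2 {c : ℤ × ℤ} {e1 e2 : Sym2 (ℤ × ℤ)} (h1 : e1 ∈ ES c) (h2 : e2 ∈ ES c)
    (hne : e1 ≠ e2) (hs : ¬ SharesEndpoint e1 e2) : EdgeDist2 e1 e2 := by
  obtain ⟨u0, hu0, hu⟩ := ES_endpoint h1
  obtain ⟨w0, hw0, hw⟩ := ES_endpoint h2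
  have huw : trm c u0 ≠ trm c w0 := by
    intro h; exact hs ⟨trm c u0, hu, h ▸ hw⟩
  have hadj : T8.Adj (trm c u0) (trm c w0) :=
    (adj_trm c u0 w0).mpr (corners_adj u0 hu0 w0 hw0 (fun h => huw (by rw [h])))
  refine ⟨hne, hs, s(trm c u0, trm c w0), T8.mem_edgeSet.mpr hadj,
    ⟨trm c u0, hu, by simp⟩, ⟨trm c w0, by simp, hw⟩⟩

lemma label_inj {f : Sym2 (ℤ × ℤ) → ℕ} (hf : IsL12 f) {c : ℤ × ℤ} {e1 e2 : Sym2 (ℤ × ℤ)}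
    (h1 : e1 ∈ ES c) (h2 : e2 ∈ ES c) (hne : e1 ≠ e2) : f e1 ≠ f e2 := by
  by_cases hs : SharesEndpoint e1 e2
  · exact hf.1 e1 (ES_edge h1) e2 (ES_edge h2) ⟨hne, hs⟩
  · have h := hf.2 e1 (ES_edge h1) e2 (ES_edge h2) (ES_dist2 h1 h2 hne hs)
    intro heq
    rw [heq, sub_self, abs_zero] at h
    omega

lemma ES_consec {f : Sym2 (ℤ × ℤ) → ℕ} (hf : IsL12 f) {c : ℤ × ℤ} {e1 e2 : Sym2 (ℤ × ℤ)}
    (h1 : e1 ∈ ES c) (h2 : e2 ∈ ES c) (hl : f e2 = f e1 + 1) : SharesEndpoint e1 e2 := by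
  by_contra hs
  have hne : e1 ≠ e2 := by intro h; rw [h] at hl; omega
  have h := hf.2 e1 (ES_edge h1) e2 (ES_edge h2) (ES_dist2 h1 h2 hne hs)
  rw [hl] at h
  push_cast at h
  rw [show ((f e1 : ℤ) - ((f e1 : ℤ) + 1)) = -1 by ring] at h
  norm_num at h

lemma uniq {f : Sym2 (ℤ × ℤ) → ℕ} (hf : IsL12 f) {e0 e1 e2 : Sym2 (ℤ × ℤ)}
    (h0 : e0 ∈ T8.edgeSet) (h1 : e1 ∈ T8.edgeSet) (h2 : e2 ∈ T8.edgeSet)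
    (s1 : SharesEndpoint e1 e0) (s2 : SharesEndpoint e2 e0) (hl : f e1 = f e2) :
    e1 = e2 := by
  by_contra hne
  by_cases hs : SharesEndpoint e1 e2
  · exact hf.1 e1 h1 e2 h2 ⟨hne, hs⟩ hl
  · have h := hf.2 e1 h1 e2 h2 ⟨hne, hs, e0, h0, s1, shares_symm s2⟩
    rw [hl, sub_self, abs_zero] at h
    omega

lemma ES_surj {f : Sym2 (ℤ × ℤ) → ℕ} (hf : IsL12Bounded 25 f) (c : ℤ × ℤ) :
    ∀ k ≤ 25, ∃ e ∈ ES c, f e = k := by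
  have mapnodup : ((ES c).map f).Nodup := by
    refine List.Nodup.map_on ?_ (ES_nodup c)
    intro x hx y hy hxy
    by_contra hne
    exact label_inj hf.1 hx hy hne hxy
  have hsub : ((ES c).map f).toFinset ⊆ Finset.range 26 := by
    intro x hx
    simp only [List.mem_toFinset, List.mem_map] at hx
    obtain ⟨e, he, rfl⟩ := hx
    have := hf.2 e (ES_edge he)
    simp only [Finset.mem_range]
    omega
  have hcard : ((ES c).map f).toFinset.card = 26 := by
    rw [List.toFinset_card_of_nodup mapnodup, List.length_map, ES_length]
  have heq : ((ES c).map f).toFinset = Finset.range 26 :=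
    Finset.eq_of_subset_of_card_le hsub (by rw [hcard, Finset.card_range])
  intro k hk
  have : k ∈ ((ES c).map f).toFinset := by
    rw [heq, Finset.mem_range]; omega
  simp only [List.mem_toFinset, List.mem_map] at this
  obtain ⟨e, he, hfe⟩ := this
  exact ⟨e, he, hfe⟩

lemma chain {f : Sym2 (ℤ × ℤ) → ℕ} (hf : IsL12Bounded 25 f) (g : ℕ → Sym2 (ℤ × ℤ))
    (hg : ∀ k ≤ 25, g k ∈ ES (0,0) ∧ f (g k) = k) (c : ℤ × ℤ) :
    ∀ k ≤ 25, (g 0 ∈ ES c ↔ g k ∈ ES c) := by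
  intro k
  induction k with
  | zero => intro _; rfl
  | succ k ih =>
    intro hk25
    have hk : k ≤ 25 := by omega
    rw [ih hk]
    have hk0 := hg k hk
    have hk1 := hg (k+1) hk25
    have shares0 : SharesEndpoint (g k) (g (k+1)) :=
      ES_consec hf.1 hk0.1 hk1.1 (by rw [hk0.2, hk1.2])
    constructor
    · intro h
      obtain ⟨e, he, hfe⟩ := ES_surj hf c (k+1) hk25
      have sh : SharesEndpoint (g k) e :=
        ES_consec hf.1 h he (by rw [hfe, hk0.2])
      have : e = g (k+1) :=
        uniq hf.1 (ES_edge hk0.1) (ES_edge he) (ES_edge hk1.1)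
          (shares_symm sh) (shares_symm shares0) (by rw [hfe, hk1.2])
      rwa [← this]
    · intro h
      obtain ⟨e, he, hfe⟩ := ES_surj hf c k hk
      have sh : SharesEndpoint e (g (k+1)) :=
        ES_consec hf.1 he h (by rw [hfe, hk1.2])
      have : e = g k :=
        uniq hf.1 (ES_edge hk1.1) (ES_edge he) (ES_edge hk0.1)
          sh shares0 (by rw [hfe, hk0.2])
      rwa [← this]

end Aux
/-- There is no `L(1,2)`-edge labeling of `T8` with labels in
`{0, …, 25}`, i.e. the span is at least `26`. -/
theorem no_L12_labeling_25 : ¬ ∃ f : Sym2 (ℤ × ℤ) → ℕ, IsL12Bounded 25 f := by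
  rintro ⟨f, hf⟩
  set A : Sym2 (ℤ × ℤ) := s(((1:ℤ),(0:ℤ)), ((2:ℤ),(0:ℤ))) with hAdef
  set B : Sym2 (ℤ × ℤ) := s(((-1:ℤ),(0:ℤ)), ((0:ℤ),(0:ℤ))) with hBdef
  have hA0 : A ∈ ES (0,0) := by decide
  have hB0 : B ∈ ES (0,0) := by decide
  have hA2 : A ∈ ES (2,0) := by decide
  have hB2 : B ∉ ES (2,0) := by decide
  have ha : f A ≤ 25 := hf.2 A (ES_edge hA0)
  have hb : f B ≤ 25 := hf.2 B (ES_edge hB0)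
  have hex : ∀ k : ℕ, ∃ e, k ≤ 25 → e ∈ ES (0,0) ∧ f e = k := by
    intro k
    by_cases hk : k ≤ 25
    · obtain ⟨e, he, hfe⟩ := ES_surj hf (0,0) k hk
      exact ⟨e, fun _ => ⟨he, hfe⟩⟩
    · exact ⟨A, fun h => absurd h hk⟩
  choose g hg using hex
  have key := chain hf g hg (2,0)
  have gA : g (f A) = A := by
    by_contra hne
    exact label_inj hf.1 (hg (f A) ha).1 hA0 hne ((hg (f A) ha).2)
  have gB : g (f B) = B := by
    by_contra hne
    exact label_inj hf.1 (hg (f B) hb).1 hB0 hne ((hg (f B) hb).2)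
  have h1 : g 0 ∈ ES (2,0) := by
    rw [key (f A) ha, gA]; exact hA2
  have h2 : B ∈ ES (2,0) := by
    rw [← gB, ← key (f B) hb]; exact h1
  exact hB2 h2
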